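/- Let u_{1:H}, u'_{1:H} be tuples of H vectors in the Euclidean unit ball of ℝ^d. Define ψ mapping such a tuple to the infinite sequence indexed by tuples (i_1,...,i_H) of finite index-sequences, with entry ∏_{h=1}^H 2^{−|i_h|/2} ∏_{k=1}^{|i_h|} u_{h, i_{h,k}}. Then ⟨ψ(u_{1:H}), ψ(u'_{1:H})⟩ = ∏_{h=1}^H 1/(1 − (1/2)⟨u_h, u'_h⟩); i.e., ψ induces the kernel K(u,u') = ∏_h (1 − ⟨u_h,u'_h⟩/2)^{−1}. -/

import Mathlib

/-- The feature map `ψ`: at index `ℓ = (i₁,…,i_H)` (a tuple of finite index-sequences over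
`[d]`), its entry is `∏_h 2^{−|i_h|/2} ∏_k u_{h, i_{h,k}}`. -/
noncomputable def psiMap {d H : ℕ} (u : Fin H → EuclideanSpace ℝ (Fin d))
    (ℓ : Fin H → List (Fin d)) : ℝ :=
  ∏ h, (Real.sqrt 2)⁻¹ ^ (ℓ h).length * ((ℓ h).map (u h)).prod

/-- Sum over all lists of products of entries equals a geometric series value. -/
lemma list_tsum_aux {d : ℕ} (q : Fin d → ℝ) (hq : ∑ i, |q i| < 1) :
    Summable (fun l : List (Fin d) => |(l.map q).prod|) ∧
      ∑' l : List (Fin d), (l.map q).prod = (1 - ∑ i, q i)⁻¹ := by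
  set e := (List.equivSigmaTuple (α := Fin d)).symm with he
  have hS0 : (0:ℝ) ≤ ∑ i, |q i| := Finset.sum_nonneg fun i _ => abs_nonneg _
  have habs_entry : ∀ (n : ℕ) (t : Fin n → Fin d),
      |((List.ofFn t).map q).prod| = ∏ j, |q (t j)| := by
    intro n t
    rw [List.map_ofFn, List.prod_ofFn, Finset.abs_prod]
    rfl
  have hentry : ∀ (n : ℕ) (t : Fin n → Fin d),
      ((List.ofFn t).map q).prod = ∏ j, q (t j) := by
    intro n t
    rw [List.map_ofFn, List.prod_ofFn]
    rfl
  have hinner : ∀ n : ℕ, ∑ t : Fin n → Fin d, ∏ j, q (t j) = (∑ i, q i) ^ n := by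
    intro n
    rw [← Fintype.prod_sum (κ := fun _ : Fin n => Fin d) (fun _ j => q j)]
    simp
  have hinner_abs : ∀ n : ℕ, ∑ t : Fin n → Fin d, ∏ j, |q (t j)| = (∑ i, |q i|) ^ n := by
    intro n
    rw [← Fintype.prod_sum (κ := fun _ : Fin n => Fin d) (fun _ j => |q j|)]
    simp
  have hsig : Summable (fun s : Σ n, Fin n → Fin d => |((List.ofFn s.2).map q).prod|) := by
    rw [summable_sigma_of_nonneg (fun _ => abs_nonneg _)]
    constructor
    · intro n; exact Summable.of_finite
    · have : (fun n : ℕ => ∑' t : Fin n → Fin d, |((List.ofFn t).map q).prod|)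
          = fun n : ℕ => (∑ i, |q i|) ^ n := by
        funext n
        rw [tsum_fintype]
        rw [← hinner_abs n]
        exact Finset.sum_congr rfl fun t _ => habs_entry n t
      rw [this]
      exact summable_geometric_of_lt_one hS0 hq
  have habs : Summable (fun l : List (Fin d) => |(l.map q).prod|) := by
    have := e.summable_iff (f := fun l : List (Fin d) => |(l.map q).prod|)
    rw [← this]
    convert hsig using 1
    exact rfl
  refine ⟨habs, ?_⟩
  rw [← e.tsum_eq (f := fun l : List (Fin d) => (l.map q).prod)]
  have hsum' : Summable (fun s : Σ n, Fin n → Fin d => ((List.ofFn s.2).map q).prod) := by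
    refine Summable.of_abs ?_
    exact hsig
  calc ∑' s : Σ n, Fin n → Fin d, (((e s).map q).prod)
      = ∑' s : Σ n, Fin n → Fin d, ((List.ofFn s.2).map q).prod := by rfl
    _ = ∑' n : ℕ, ∑' t : Fin n → Fin d, ((List.ofFn t).map q).prod := hsum'.tsum_sigma
    _ = ∑' n : ℕ, (∑ i, q i) ^ n := by
        congr 1; funext n
        rw [tsum_fintype, ← hinner n]
        exact Finset.sum_congr rfl fun t _ => hentry n t
    _ = (1 - ∑ i, q i)⁻¹ := by
        refine tsum_geometric_of_norm_lt_one ?_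
        rw [Real.norm_eq_abs]
        calc |∑ i, q i| ≤ ∑ i, |q i| := Finset.abs_sum_le_sum_abs _ _
          _ < 1 := hq

/-- Sums over product (pi) index types factor into products of sums. -/
lemma pi_tsum_prod {X : Type*} : ∀ (n : ℕ) (F : Fin n → X → ℝ),
    (∀ h, Summable (fun x => |F h x|)) →
    Summable (fun g : Fin n → X => |∏ h, F h (g h)|) ∧
      ∑' g : Fin n → X, ∏ h, F h (g h) = ∏ h, ∑' x, F h x := by
  intro n
  induction n with
  | zero =>
    intro F _
    constructor
    · exact Summable.of_finite
    · simp [tsum_fintype]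
  | succ n ih =>
    intro F hF
    obtain ⟨ihs, iht⟩ := ih (fun h => F h.succ) (fun h => hF h.succ)
    set e : (X × (Fin n → X)) ≃ (Fin (n+1) → X) :=
      Fin.consEquiv (fun _ => X) with he
    have hterm : ∀ p : X × (Fin n → X),
        ∏ h, F h (e p h) = F 0 p.1 * ∏ h : Fin n, F h.succ (p.2 h) := by
      intro p
      rw [Fin.prod_univ_succ]
      simp [he, Fin.consEquiv]
    have hmulsum : Summable (fun p : X × (Fin n → X) =>
        ‖F 0 p.1 * ∏ h : Fin n, F h.succ (p.2 h)‖) := by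
      have h1 : Summable (fun x : X => ‖F 0 x‖) := by
        simp only [Real.norm_eq_abs]; exact hF 0
      have h2 : Summable (fun g : Fin n → X => ‖∏ h : Fin n, F h.succ (g h)‖) := by
        simp only [Real.norm_eq_abs]; exact ihs
      exact Summable.mul_norm (R := ℝ) (ι := X) (ι' := Fin n → X)
        (f := F 0) (g := fun g : Fin n → X => ∏ h : Fin n, F h.succ (g h)) h1 h2
    constructor
    · rw [← e.summable_iff]
      refine Summable.congr (f := fun p : X × (Fin n → X) =>
        ‖F 0 p.1 * ∏ h : Fin n, F h.succ (p.2 h)‖) ?_ ?_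
      · exact hmulsum
      · intro p
        simp only [Function.comp_apply, Real.norm_eq_abs, ← hterm p]
    · rw [← e.tsum_eq]
      have : ∑' p : X × (Fin n → X), ∏ h, F h (e p h)
          = ∑' p : X × (Fin n → X), F 0 p.1 * ∏ h : Fin n, F h.succ (p.2 h) :=
        tsum_congr hterm
      rw [this, ← tsum_mul_tsum_of_summable_norm (R := ℝ) (ι := X) (ι' := Fin n → X)
        (f := F 0) (g := fun g : Fin n → X => ∏ h : Fin n, F h.succ (g h))
        (by simp only [Real.norm_eq_abs]; exact hF 0)
        (by simp only [Real.norm_eq_abs]; exact ihs), iht, Fin.prod_univ_succ]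

lemma list_sq {d : ℕ} (v w : Fin d → ℝ) (l : List (Fin d)) :
    ((Real.sqrt 2)⁻¹ ^ l.length * (l.map v).prod) *
      ((Real.sqrt 2)⁻¹ ^ l.length * (l.map w).prod)
    = (l.map fun i => v i * w i / 2).prod := by
  induction l with
  | nil => simp
  | cons i l ih =>
    simp only [List.map_cons, List.prod_cons, List.length_cons, pow_succ]
    have h2 : (Real.sqrt 2)⁻¹ * (Real.sqrt 2)⁻¹ = (2:ℝ)⁻¹ := by
      rw [← mul_inv, Real.mul_self_sqrt (by norm_num)]
    calc ((Real.sqrt 2)⁻¹ ^ l.length * (Real.sqrt 2)⁻¹ * (v i * (l.map v).prod)) *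
          ((Real.sqrt 2)⁻¹ ^ l.length * (Real.sqrt 2)⁻¹ * (w i * (l.map w).prod))
        = ((Real.sqrt 2)⁻¹ * (Real.sqrt 2)⁻¹) * (v i * w i) *
            (((Real.sqrt 2)⁻¹ ^ l.length * (l.map v).prod) *
             ((Real.sqrt 2)⁻¹ ^ l.length * (l.map w).prod)) := by ring
      _ = (v i * w i / 2) * (l.map fun i => v i * w i / 2).prod := by rw [h2, ih]; ring
      _ = _ := rfl

lemma abs_sum_le_one {d : ℕ} (v w : EuclideanSpace ℝ (Fin d))
    (hv : ‖v‖ ≤ 1) (hw : ‖w‖ ≤ 1) : ∑ i, |v i| * |w i| ≤ 1 := by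
  have hv2 : ∑ i, |v i| ^ 2 = ‖v‖ ^ 2 := by
    rw [EuclideanSpace.norm_eq, Real.sq_sqrt (Finset.sum_nonneg fun i _ => sq_nonneg _)]
    exact Finset.sum_congr rfl fun i _ => by rw [sq_abs]; simp [Real.norm_eq_abs, sq_abs]
  have hw2 : ∑ i, |w i| ^ 2 = ‖w‖ ^ 2 := by
    rw [EuclideanSpace.norm_eq, Real.sq_sqrt (Finset.sum_nonneg fun i _ => sq_nonneg _)]
    exact Finset.sum_congr rfl fun i _ => by rw [sq_abs]; simp [Real.norm_eq_abs, sq_abs]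
  have hcs := Finset.sum_mul_sq_le_sq_mul_sq Finset.univ (fun i => |v i|) (fun i => |w i|)
  have hS0 : (0:ℝ) ≤ ∑ i, |v i| * |w i| :=
    Finset.sum_nonneg fun i _ => mul_nonneg (abs_nonneg _) (abs_nonneg _)
  have hsq : (∑ i, |v i| * |w i|) ^ 2 ≤ 1 := by
    refine hcs.trans ?_
    rw [hv2, hw2]
    have h1 : ‖v‖ ^ 2 ≤ 1 := by nlinarith [norm_nonneg v]
    have h2 : ‖w‖ ^ 2 ≤ 1 := by nlinarith [norm_nonneg w]
    nlinarith [sq_nonneg ‖v‖, sq_nonneg ‖w‖]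
  nlinarith

lemma inner_eq_sum {d : ℕ} (v w : EuclideanSpace ℝ (Fin d)) :
    (inner ℝ v w : ℝ) = ∑ i, v i * w i := by
  simp [PiLp.inner_apply, RCLike.inner_apply, mul_comm]

/-- `ψ` induces the kernel `K(u, u') = ∏_h (1 − ⟨u_h, u'_h⟩/2)⁻¹`: the `ℓ²` inner product of
the features of two tuples of unit-ball vectors equals the product kernel. -/
theorem psiMap_kernel (d H : ℕ) (u u' : Fin H → EuclideanSpace ℝ (Fin d))
    (hu : ∀ h, ‖u h‖ ≤ 1) (hu' : ∀ h, ‖u' h‖ ≤ 1) :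
    ∑' (ℓ : Fin H → List (Fin d)), psiMap u ℓ * psiMap u' ℓ =
      ∏ h, (1 - (inner ℝ (u h) (u' h) : ℝ) / 2)⁻¹ := by
  set q : Fin H → Fin d → ℝ := fun h i => u h i * u' h i / 2 with hq
  set F : Fin H → List (Fin d) → ℝ := fun h l => (l.map (q h)).prod with hFdef
  have hqsum : ∀ h, ∑ i, |q h i| < 1 := by
    intro h
    have : ∑ i, |q h i| = (∑ i, |u h i| * |u' h i|) / 2 := by
      rw [Finset.sum_div]
      refine Finset.sum_congr rfl fun i _ => ?_
      rw [hq]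
      rw [abs_div, abs_mul]
      simp
    rw [this]
    have := abs_sum_le_one (u h) (u' h) (hu h) (hu' h)
    linarith
  have hsummable : ∀ h, Summable (fun l : List (Fin d) => |F h l|) :=
    fun h => (list_tsum_aux (q h) (hqsum h)).1
  have htsum : ∀ h, ∑' l : List (Fin d), F h l = (1 - ∑ i, q h i)⁻¹ :=
    fun h => (list_tsum_aux (q h) (hqsum h)).2
  have hpoint : ∀ ℓ : Fin H → List (Fin d),
      psiMap u ℓ * psiMap u' ℓ = ∏ h, F h (ℓ h) := by
    intro ℓ
    rw [psiMap, psiMap, ← Finset.prod_mul_distrib]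
    exact Finset.prod_congr rfl fun h _ => list_sq (u h) (u' h) (ℓ h)
  rw [tsum_congr hpoint, (pi_tsum_prod H F hsummable).2]
  refine Finset.prod_congr rfl fun h _ => ?_
  rw [htsum h]
  congr 1
  rw [inner_eq_sum, Finset.sum_div]
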